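/- Let T_2 : [0,1] → [0,1] be the tent map T_2(x) = 1 − |2x − 1|, which preserves Lebesgue measure μ. For Lebesgue-almost every x̃ ∈ [0,1], with the observable φ(x) = −log|x − x̃|, the following holds: for μ-almost every x ∈ [0,1] there exist C > 0 and u_0 > 0 such that for all u ≥ u_0, |log τ_u^φ(x) − u| ≤ C·log u, where τ_u^φ(x) = min{n ≥ 0 : φ(T_2^n(x)) ≥ u}. -/

import Mathlib

open MeasureTheory Filter Set Real

noncomputable section

/-- The tent map `T₂(x) = 1 − |2x − 1|`. -/
def tent (x : ℝ) : ℝ := 1 - |2 * x - 1|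

/-- Hitting time of the observable to level `u`:
`τ_u^φ(x) = min {n ≥ 0 : φ(f^n x) ≥ u}`. -/
def hitLevel {X : Type*} (f : X → X) (φ : X → ℝ) (u : ℝ) (x : X) : ℕ :=
  sInf {n : ℕ | u ≤ φ (f^[n] x)}

open scoped ENNReal

namespace TentAux

lemma tent_left {x : ℝ} (h0 : 0 ≤ x) (h1 : x ≤ 1/2) : tent x = 2 * x := by
  unfold tent
  rw [abs_of_nonpos (by linarith)]; ring

lemma tent_right {x : ℝ} (h0 : 1/2 ≤ x) (h1 : x ≤ 1) : tent x = 2 - 2 * x := by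
  unfold tent
  rw [abs_of_nonneg (by linarith)]; ring

/-- dyadic interval -/
def I (n k : ℕ) : Set ℝ := Set.Icc ((k : ℝ)/2^n) (((k : ℝ)+1)/2^n)

lemma tent_branch (n : ℕ) : ∀ k : ℕ, k < 2^n →
    (∀ x ∈ I n k, tent^[n] x = 2^n * x - k) ∨
    (∀ x ∈ I n k, tent^[n] x = ((k : ℝ)+1) - 2^n * x) := by
  induction n with
  | zero =>
    intro k hk
    interval_cases k
    left
    intro x _
    simp
  | succ n ih =>
    intro k hk
    rcases lt_or_ge k (2^n) with hlt | hge
    · -- left half, tent x = 2x, 2x ∈ I n k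
      have h2 : (0:ℝ) < 2^(n+1) := by positivity
      have hmem : ∀ x ∈ I (n+1) k, (0 ≤ x ∧ x ≤ 1/2) ∧ 2*x ∈ I n k := by
        intro x hx
        obtain ⟨hx1, hx2⟩ := hx
        have hk1 : ((k:ℝ)+1) ≤ 2^n := by exact_mod_cast hlt
        have hub : x ≤ 1/2 := by
          have : ((k:ℝ)+1)/2^(n+1) ≤ (2:ℝ)^n/2^(n+1) := by gcongr
          have h' : (2:ℝ)^n/2^(n+1) = 1/2 := by
            rw [pow_succ]; field_simp
          nlinarith [this, h']
        refine ⟨⟨?_, hub⟩, ?_, ?_⟩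
        · have : (0:ℝ) ≤ (k:ℝ)/2^(n+1) := by positivity
          linarith
        · have : (k:ℝ)/2^n = 2 * ((k:ℝ)/2^(n+1)) := by
            rw [pow_succ]; field_simp
          rw [this]; linarith
        · have : ((k:ℝ)+1)/2^n = 2 * (((k:ℝ)+1)/2^(n+1)) := by
            rw [pow_succ]; field_simp
          rw [this]; linarith
      rcases ih k hlt with hb | hb
      · left
        intro x hx
        obtain ⟨⟨h0, h1⟩, hmem2⟩ := hmem x hx
        rw [Function.iterate_succ_apply, tent_left h0 h1, hb _ hmem2]
        rw [pow_succ]; ring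
      · right
        intro x hx
        obtain ⟨⟨h0, h1⟩, hmem2⟩ := hmem x hx
        rw [Function.iterate_succ_apply, tent_left h0 h1, hb _ hmem2]
        rw [pow_succ]; ring
    · -- right half
      set k' := 2^(n+1) - 1 - k with hk'def
      have hk'lt : k' < 2^n := by
        have h1 : k' ≤ 2^(n+1) - 1 - 2^n := by
          apply Nat.sub_le_sub_left hge
        have : 2^(n+1) - 1 - 2^n = 2^n - 1 := by
          omega
        omega
      have hk'cast : (k' : ℝ) = 2^(n+1) - 1 - k := by
        have hk1 : k ≤ 2^(n+1) - 1 := by omega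
        have : (2:ℝ)^(n+1) = ((2^(n+1) : ℕ) : ℝ) := by push_cast; ring
        rw [hk'def]
        push_cast [Nat.sub_sub, Nat.cast_sub (by omega : 1 + k ≤ 2^(n+1))]
        push_cast
        ring
      have h2 : (0:ℝ) < 2^(n+1) := by positivity
      have hmem : ∀ x ∈ I (n+1) k, (1/2 ≤ x ∧ x ≤ 1) ∧ 2 - 2*x ∈ I n k' := by
        intro x hx
        obtain ⟨hx1, hx2⟩ := hx
        have hgc : (2:ℝ)^n ≤ (k:ℝ) := by exact_mod_cast hge
        have hkc : (k:ℝ)+1 ≤ 2^(n+1) := by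
          have : k + 1 ≤ 2^(n+1) := hk
          exact_mod_cast this
        have hlb : 1/2 ≤ x := by
          have : (2:ℝ)^n/2^(n+1) ≤ (k:ℝ)/2^(n+1) := by gcongr
          have h' : (2:ℝ)^n/2^(n+1) = 1/2 := by
            rw [pow_succ]; field_simp
          nlinarith [this, h']
        have hub : x ≤ 1 := by
          have : ((k:ℝ)+1)/2^(n+1) ≤ (2:ℝ)^(n+1)/2^(n+1) := by gcongr
          have h' : (2:ℝ)^(n+1)/2^(n+1) = 1 := by field_simp
          nlinarith [this, h']
        refine ⟨⟨hlb, hub⟩, ?_, ?_⟩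
        · rw [div_le_iff₀ (by positivity : (0:ℝ) < 2^n), hk'cast]
          have hxe : x * 2^(n+1) ≤ (k:ℝ)+1 := by
            rw [le_div_iff₀ h2] at hx2; linarith
          have hp : (2:ℝ)^(n+1) = 2 * 2^n := by rw [pow_succ]; ring
          nlinarith [hxe, hp]
        · rw [le_div_iff₀ (by positivity : (0:ℝ) < 2^n), hk'cast]
          have hxe : (k:ℝ) ≤ x * 2^(n+1) := by
            rw [div_le_iff₀ h2] at hx1; linarith
          have hp : (2:ℝ)^(n+1) = 2 * 2^n := by rw [pow_succ]; ring
          nlinarith [hxe, hp]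
      rcases ih k' hk'lt with hb | hb
      · right
        intro x hx
        obtain ⟨⟨h0, h1⟩, hmem2⟩ := hmem x hx
        rw [Function.iterate_succ_apply, tent_right h0 h1, hb _ hmem2, hk'cast]
        rw [pow_succ]; ring
      · left
        intro x hx
        obtain ⟨⟨h0, h1⟩, hmem2⟩ := hmem x hx
        rw [Function.iterate_succ_apply, tent_right h0 h1, hb _ hmem2, hk'cast]
        rw [pow_succ]; ring



lemma child {n m k : ℕ} {x : ℝ} (hx : x ∈ I n k) :
    ∃ k', k*2^m ≤ k' ∧ k' < (k+1)*2^m ∧ x ∈ I (n+m) k' := by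
  obtain ⟨hx1, hx2⟩ := hx
  have h2n : (0:ℝ) < 2^n := by positivity
  have h2m : (0:ℝ) < 2^m := by positivity
  have h2nm : (0:ℝ) < 2^(n+m) := by positivity
  set t : ℝ := x * 2^(n+m) with ht
  have hxnn : 0 ≤ x := le_trans (by positivity) hx1
  have htnn : 0 ≤ t := by positivity
  have hd : ((k+1) : ℕ) * 2^m = k*2^m + 2^m := by ring
  have h1m : (1:ℕ) ≤ 2^m := Nat.one_le_two_pow
  have h1km : (1:ℕ) ≤ (k+1)*2^m := by
    calc (1:ℕ) ≤ 2^m := h1m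
      _ ≤ (k+1)*2^m := Nat.le_mul_of_pos_left _ (by omega)
  have htl : (k*2^m : ℕ) ≤ t := by
    have h' : (k:ℝ) ≤ x * 2^n := (div_le_iff₀ h2n).mp hx1
    push_cast
    rw [ht, pow_add]
    nlinarith
  have htu : t ≤ ((k+1)*2^m : ℕ) := by
    have h' : x * 2^n ≤ (k:ℝ)+1 := (le_div_iff₀ h2n).mp hx2
    push_cast
    rw [ht, pow_add]
    nlinarith
  refine ⟨min ⌊t⌋₊ ((k+1)*2^m - 1), ?_, ?_, ?_, ?_⟩
  · refine le_min (Nat.le_floor htl) ?_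
    omega
  · exact lt_of_le_of_lt (min_le_right _ _) (by omega)
  · rw [div_le_iff₀ h2nm]
    calc ((min ⌊t⌋₊ ((k+1)*2^m - 1) : ℕ) : ℝ) ≤ (⌊t⌋₊ : ℝ) := by
          exact_mod_cast min_le_left _ _
      _ ≤ t := Nat.floor_le htnn
      _ = x * 2^(n+m) := ht
  · rw [le_div_iff₀ h2nm]
    rcases le_or_gt (((k+1)*2^m : ℕ) : ℝ) (t + 1) with h | h
    · calc x * 2^(n+m) = t := ht.symm
        _ ≤ ((k+1)*2^m : ℕ) := htu
        _ ≤ ((min ⌊t⌋₊ ((k+1)*2^m - 1) : ℕ) : ℝ) + 1 := by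
            rcases min_cases ⌊t⌋₊ ((k+1)*2^m - 1) with ⟨he, _⟩ | ⟨he, _⟩
            · rw [he]
              have : ((k+1)*2^m : ℕ) ≤ ⌊t⌋₊ + 1 := by
                have := Nat.lt_floor_add_one t
                by_contra hc
                push_neg at hc
                have h2 : (⌊t⌋₊ : ℝ) + 2 ≤ (((k+1)*2^m : ℕ) : ℝ) := by
                  exact_mod_cast hc
                linarith
              exact_mod_cast Nat.cast_le.mpr this
            · rw [he]
              push_cast [Nat.cast_sub h1km]
              linarith
    · calc x * 2^(n+m) = t := ht.symm
        _ ≤ (⌊t⌋₊ : ℝ) + 1 := le_of_lt (Nat.lt_floor_add_one t)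
        _ ≤ ((min ⌊t⌋₊ ((k+1)*2^m - 1) : ℕ) : ℝ) + 1 := by
            have hfl : ⌊t⌋₊ ≤ (k+1)*2^m - 1 := by
              have : (⌊t⌋₊ : ℝ) ≤ t := Nat.floor_le htnn
              have : (⌊t⌋₊ : ℝ) < (((k+1)*2^m : ℕ) : ℝ) := by
                push_cast at h ⊢
                linarith
              have := Nat.cast_lt.mp this
              omega
            simp [min_eq_left hfl]

lemma I_sub {n m k b : ℕ} (hbl : k*2^m ≤ b) (hbu : b + 1 ≤ (k+1)*2^m) :
    I (n+m) b ⊆ I n k := by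
  intro x hx
  obtain ⟨h1, h2⟩ := hx
  have e1 : ((k:ℝ))/2^n = ((k:ℝ)*2^m)/2^(n+m) := by
    rw [pow_add]; field_simp
  have e2 : ((k:ℝ)+1)/2^n = (((k:ℝ)+1)*2^m)/2^(n+m) := by
    rw [pow_add]; field_simp
  have hblr : ((k:ℝ)*2^m) ≤ (b:ℝ) := by exact_mod_cast hbl
  have hbur : ((b:ℝ)+1) ≤ ((k:ℝ)+1)*2^m := by exact_mod_cast hbu
  constructor
  · rw [e1]
    exact le_trans (by gcongr) h1
  · rw [e2]
    refine le_trans h2 (by gcongr)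

lemma badchild (n m k d : ℕ) (hk : k < 2^n) (hd : d < 2^m) :
    ∃ b, k*2^m ≤ b ∧ b + 1 ≤ (k+1)*2^m ∧
      ∀ x ∈ I (n+m) b, tent^[n] x ∈ Icc ((d:ℝ)/2^m) (((d:ℝ)+1)/2^m) := by
  have h2m : (0:ℝ) < 2^m := by positivity
  have h2nm : (0:ℝ) < 2^(n+m) := by positivity
  have hpow : (2:ℝ)^(n+m) = 2^n * 2^m := pow_add 2 n m
  have hN : (k+1)*2^m = k*2^m + 2^m := by ring
  rcases tent_branch n k hk with hb | hb
  · refine ⟨k*2^m + d, Nat.le_add_right _ _, by omega, ?_⟩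
    intro x hx
    have hxnk : x ∈ I n k := I_sub (Nat.le_add_right _ _) (by omega) hx
    rw [hb x hxnk]
    obtain ⟨h1, h2⟩ := hx
    have h1' : ((k:ℝ)*2^m + d) ≤ x * 2^(n+m) := by
      have := (div_le_iff₀ h2nm).mp h1
      push_cast at this
      linarith
    have h2' : x * 2^(n+m) ≤ (k:ℝ)*2^m + d + 1 := by
      have := (le_div_iff₀ h2nm).mp h2
      push_cast at this
      linarith
    have e : ((2:ℝ)^n * x - k)*2^m = x*2^(n+m) - k*2^m := by rw [hpow]; ring
    constructor
    · rw [div_le_iff₀ h2m, e]; linarith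
    · rw [le_div_iff₀ h2m, e]; linarith
  · have hd1 : d + 1 ≤ 2^m := hd
    refine ⟨(k+1)*2^m - d - 1, by omega, by omega, ?_⟩
    intro x hx
    have hbcast : (((k+1)*2^m - d - 1 : ℕ) : ℝ) = ((k:ℝ)+1)*2^m - d - 1 := by
      push_cast [Nat.cast_sub (by omega : d + 1 ≤ (k+1)*2^m), Nat.sub_sub]
      ring
    have hxnk : x ∈ I n k := I_sub (by omega) (by omega) hx
    rw [hb x hxnk]
    obtain ⟨h1, h2⟩ := hx
    have h1' : ((k:ℝ)+1)*2^m - d - 1 ≤ x * 2^(n+m) := by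
      have := (div_le_iff₀ h2nm).mp h1
      rw [hbcast] at this
      linarith
    have h2' : x * 2^(n+m) ≤ ((k:ℝ)+1)*2^m - d := by
      have := (le_div_iff₀ h2nm).mp h2
      rw [hbcast] at this
      linarith
    have e : ((k:ℝ) + 1 - 2^n * x)*2^m = ((k:ℝ)+1)*2^m - x*2^(n+m) := by
      rw [hpow]; ring
    constructor
    · rw [div_le_iff₀ h2m, e]; linarith
    · rw [le_div_iff₀ h2m, e]; linarith

lemma piece_measure (n k : ℕ) (hk : k < 2^n) (a b : ℝ) :
    volume (I n k ∩ tent^[n] ⁻¹' (Icc a b)) ≤ ENNReal.ofReal ((b - a)/2^n) := by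
  have h2n : (0:ℝ) < 2^n := by positivity
  rcases tent_branch n k hk with hb | hb
  · have hsub : I n k ∩ tent^[n] ⁻¹' (Icc a b) ⊆ Icc ((a+k)/2^n) ((b+k)/2^n) := by
      rintro x ⟨hxI, hxP⟩
      rw [Set.mem_preimage, hb x hxI, Set.mem_Icc] at hxP
      constructor
      · rw [div_le_iff₀ h2n]; linarith [hxP.1]
      · rw [le_div_iff₀ h2n]; linarith [hxP.2]
    refine le_trans (measure_mono hsub) ?_
    rw [Real.volume_Icc]
    apply le_of_eq
    congr 1
    field_simp
    ring
  · have hsub : I n k ∩ tent^[n] ⁻¹' (Icc a b) ⊆ Icc (((k:ℝ)+1-b)/2^n) (((k:ℝ)+1-a)/2^n) := by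
      rintro x ⟨hxI, hxP⟩
      rw [Set.mem_preimage, hb x hxI, Set.mem_Icc] at hxP
      constructor
      · rw [div_le_iff₀ h2n]; linarith [hxP.2]
      · rw [le_div_iff₀ h2n]; linarith [hxP.1]
    refine le_trans (measure_mono hsub) ?_
    rw [Real.volume_Icc]
    apply le_of_eq
    congr 1
    field_simp
    ring

lemma Icc01_eq : Set.Icc (0:ℝ) 1 = I 0 0 := by
  simp [I]

lemma strip_measure (n : ℕ) (a b : ℝ) :
    volume (Icc (0:ℝ) 1 ∩ tent^[n] ⁻¹' (Icc a b)) ≤ ENNReal.ofReal (b - a) := by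
  rcases le_or_gt a b with hab | hab
  · have hcov : Icc (0:ℝ) 1 ∩ tent^[n] ⁻¹' (Icc a b) ⊆
        ⋃ k ∈ Finset.range (2^n), (I n k ∩ tent^[n] ⁻¹' (Icc a b)) := by
      rintro x ⟨hx, hp⟩
      have hx0 : x ∈ I 0 0 := Icc01_eq ▸ hx
      obtain ⟨k', _, h2, h3⟩ := child (m := n) hx0
      have h2' : k' < 2^n := by simpa using h2
      exact Set.mem_biUnion (Finset.mem_range.mpr h2') ⟨by simpa using h3, hp⟩
    refine le_trans (measure_mono hcov) (le_trans (measure_biUnion_finset_le _ _) ?_)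
    have hbd : ∀ k ∈ Finset.range (2^n), volume (I n k ∩ tent^[n] ⁻¹' (Icc a b)) ≤
        ENNReal.ofReal ((b - a)/2^n) := fun k hk =>
      piece_measure n k (Finset.mem_range.mp hk) a b
    refine le_trans (Finset.sum_le_sum hbd) ?_
    rw [Finset.sum_const, Finset.card_range, nsmul_eq_mul]
    have hcast : ((2^n : ℕ) : ℝ≥0∞) = ENNReal.ofReal ((2:ℝ)^n) := by
      rw [ENNReal.ofReal_pow (by norm_num)]
      norm_num
    rw [hcast, ← ENNReal.ofReal_mul (by positivity)]
    apply le_of_eq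
    congr 1
    field_simp
  · have he : Icc a b = (∅ : Set ℝ) := Set.Icc_eq_empty (not_le.mpr hab)
    rw [he]
    simpa using zero_le

lemma key (m d : ℕ) (hd : d < 2^m) :
    ∀ K n k, k < 2^n →
      volume (I n k ∩ ⋂ j, ⋂ (_ : j < K), tent^[n + j*m] ⁻¹' (I m d)ᶜ)
        ≤ ENNReal.ofReal ((((2:ℝ)^m - 1)/2^m)^K / 2^n) := by
  have h2m : (0:ℝ) < 2^m := by positivity
  intro K
  induction K with
  | zero =>
    intro n k hk
    have h2n : (0:ℝ) < 2^n := by positivity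
    simp only [Nat.not_lt_zero, Set.iInter_of_empty, Set.iInter_univ, Set.inter_univ,
      pow_zero]
    rw [I, Real.volume_Icc]
    apply le_of_eq
    congr 1
    field_simp
    ring
  | succ K ih =>
    intro n k hk
    have h2n : (0:ℝ) < 2^n := by positivity
    obtain ⟨b, hbl, hbu, hbD⟩ := badchild n m k d hk hd
    set C : Finset ℕ := (Finset.Ico (k*2^m) ((k+1)*2^m)).erase b with hC
    have hcov : I n k ∩ ⋂ j, ⋂ (_ : j < K+1), tent^[n + j*m] ⁻¹' (I m d)ᶜ ⊆
        ⋃ k' ∈ C, (I (n+m) k' ∩ ⋂ j, ⋂ (_ : j < K), tent^[(n+m) + j*m] ⁻¹' (I m d)ᶜ) := by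
      rintro x ⟨hxI, hxJ⟩
      simp only [Set.mem_iInter] at hxJ
      have hx0 : tent^[n] x ∉ I m d := by
        have h' := hxJ 0 (Nat.succ_pos K)
        simpa using h'
      obtain ⟨k', hc1, hc2, hc3⟩ := child (m := m) hxI
      have hk'b : k' ≠ b := fun h => hx0 (hbD x (h ▸ hc3))
      refine Set.mem_biUnion
        (Finset.mem_erase.mpr ⟨hk'b, Finset.mem_Ico.mpr ⟨hc1, hc2⟩⟩) ⟨hc3, ?_⟩
      simp only [Set.mem_iInter]
      intro j hj
      have h' := hxJ (j+1) (by omega)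
      rw [show n + (j+1)*m = n + m + j*m by ring] at h'
      exact h'
    refine le_trans (measure_mono hcov) (le_trans (measure_biUnion_finset_le _ _) ?_)
    have hbd : ∀ k' ∈ C, volume (I (n+m) k' ∩ ⋂ j, ⋂ (_ : j < K),
        tent^[(n+m) + j*m] ⁻¹' (I m d)ᶜ) ≤
        ENNReal.ofReal ((((2:ℝ)^m - 1)/2^m)^K / 2^(n+m)) := by
      intro k' hk'
      apply ih (n+m)
      have h1 : k' < (k+1)*2^m := (Finset.mem_Ico.mp (Finset.mem_of_mem_erase hk')).2
      have h2 : (k+1)*2^m ≤ 2^n*2^m := Nat.mul_le_mul_right _ hk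
      rw [pow_add]
      omega
    refine le_trans (Finset.sum_le_sum hbd) ?_
    rw [Finset.sum_const]
    have hcard : C.card = 2^m - 1 := by
      rw [hC, Finset.card_erase_of_mem (Finset.mem_Ico.mpr ⟨hbl, by omega⟩),
        Nat.card_Ico]
      have : (k+1)*2^m = k*2^m + 2^m := by ring
      omega
    rw [hcard, nsmul_eq_mul]
    have hcast : ((2^m - 1 : ℕ) : ℝ≥0∞) = ENNReal.ofReal ((2:ℝ)^m - 1) := by
      have h1 : (1:ℕ) ≤ 2^m := Nat.one_le_two_pow
      rw [← ENNReal.ofReal_natCast]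
      congr 1
      push_cast [Nat.cast_sub h1]
      norm_num
    rw [hcast, ← ENNReal.ofReal_mul (sub_nonneg.mpr (one_le_pow₀ (by norm_num)))]
    apply le_of_eq
    congr 1
    rw [pow_succ, pow_add]
    field_simp

lemma qbound (m : ℕ) :
    (((2:ℝ)^m - 1)/2^m)^(m*2^m) ≤ Real.exp (-(m:ℝ)) := by
  have h2m : (0:ℝ) < 2^m := by positivity
  have h1m : (1:ℝ) ≤ 2^m := one_le_pow₀ (by norm_num)
  have hq : ((2:ℝ)^m - 1)/2^m = 1 - 1/2^m := by field_simp
  have hle : (1:ℝ) - 1/2^m ≤ Real.exp (-(1/2^m)) := by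
    have := Real.add_one_le_exp (-(1/2^m))
    linarith
  have hnn : (0:ℝ) ≤ 1 - 1/2^m := by
    rw [sub_nonneg, div_le_one h2m]
    exact h1m
  calc (((2:ℝ)^m - 1)/2^m)^(m*2^m) = ((1:ℝ) - 1/2^m)^(m*2^m) := by rw [hq]
    _ ≤ (Real.exp (-(1/2^m)))^(m*2^m) := pow_le_pow_left₀ hnn hle _
    _ = Real.exp (((m*2^m : ℕ):ℝ) * (-(1/2^m))) := by
        rw [← Real.exp_nat_mul]
    _ = Real.exp (-(m:ℝ)) := by
        congr 1
        push_cast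
        field_simp
    
/-- the dyadic index of the interval containing xt -/
def dIdx (xt : ℝ) (m : ℕ) : ℕ := ⌊xt * 2^m⌋₊

lemma dIdx_lt {xt : ℝ} (hxt : xt ∈ Ico (0:ℝ) 1) (m : ℕ) : dIdx xt m < 2^m := by
  have h2m : (0:ℝ) < 2^m := by positivity
  have hlt : xt * 2^m < ((2^m : ℕ) : ℝ) := by
    push_cast
    nlinarith [hxt.2, h2m]
  exact Nat.floor_lt (by nlinarith [hxt.1] : (0:ℝ) ≤ xt * 2^m) |>.mpr hlt

lemma mem_dIdx {xt : ℝ} (hxt : xt ∈ Ico (0:ℝ) 1) (m : ℕ) : xt ∈ I m (dIdx xt m) := by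
  have h2m : (0:ℝ) < 2^m := by positivity
  have hnn : (0:ℝ) ≤ xt * 2^m := by nlinarith [hxt.1]
  constructor
  · rw [div_le_iff₀ h2m]
    exact Nat.floor_le hnn
  · rw [le_div_iff₀ h2m]
    exact le_of_lt (Nat.lt_floor_add_one _)

/-- the bad set for the upper bound at scale m -/
def BadHigh (xt : ℝ) (m : ℕ) : Set ℝ :=
  Icc (0:ℝ) 1 ∩ ⋂ j, ⋂ (_ : j < m*2^m), tent^[0 + j*m] ⁻¹' (I m (dIdx xt m))ᶜ

lemma badHigh_meas {xt : ℝ} (hxt : xt ∈ Ico (0:ℝ) 1) (m : ℕ) :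
    volume (BadHigh xt m) ≤ ENNReal.ofReal (Real.exp (-(m:ℝ))) := by
  have h := key m (dIdx xt m) (dIdx_lt hxt m) (m*2^m) 0 0 (by norm_num)
  rw [← Icc01_eq] at h
  refine le_trans h ?_
  apply ENNReal.ofReal_le_ofReal
  have := qbound m
  simpa using this

lemma ae_high {xt : ℝ} (hxt : xt ∈ Ico (0:ℝ) 1) :
    ∀ᵐ x ∂(volume.restrict (Set.Icc (0:ℝ) 1)),
      ∀ᶠ m in atTop, ∃ j, j < m*2^m ∧ tent^[j*m] x ∈ I m (dIdx xt m) := by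
  have hsum : (∑' m, (volume.restrict (Set.Icc (0:ℝ) 1)) (BadHigh xt m)) ≠ ∞ := by
    have hbd : ∀ m, (volume.restrict (Set.Icc (0:ℝ) 1)) (BadHigh xt m) ≤
        (ENNReal.ofReal (Real.exp (-1)))^m := by
      intro m
      rw [Measure.restrict_apply' measurableSet_Icc]
      refine le_trans (measure_mono Set.inter_subset_left) ?_
      refine le_trans (badHigh_meas hxt m) ?_
      rw [← ENNReal.ofReal_pow (le_of_lt (Real.exp_pos _))]
      apply ENNReal.ofReal_le_ofReal
      rw [← Real.exp_nat_mul]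
      apply le_of_eq
      congr 1
      ring
    refine ne_top_of_le_ne_top ?_ (ENNReal.tsum_le_tsum hbd)
    rw [ENNReal.tsum_geometric]
    simp only [ne_eq, ENNReal.inv_eq_top]
    intro hcon
    have h1 : ENNReal.ofReal (Real.exp (-1)) < 1 := by
      rw [← ENNReal.ofReal_one]
      apply ENNReal.ofReal_lt_ofReal_iff_of_nonneg (le_of_lt (Real.exp_pos _)) |>.mpr
      exact Real.exp_lt_one_iff.mpr (by norm_num)
    rw [tsub_eq_zero_iff_le] at hcon
    exact absurd hcon (not_le.mpr h1)
  filter_upwards [MeasureTheory.ae_eventually_notMem hsum,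
    ae_restrict_mem measurableSet_Icc] with x hx hxI
  filter_upwards [hx] with m hm
  rw [BadHigh] at hm
  by_contra hcon
  push_neg at hcon
  apply hm
  refine ⟨hxI, ?_⟩
  simp only [Set.mem_iInter]
  intro j hj
  intro hmem
  exact hcon j hj (by simpa using hmem)

/-- radius for the lower bound at scale m -/
def rad (m : ℕ) : ℝ := 1/(2^m * ((m:ℝ)+1)^2)

lemma rad_pos (m : ℕ) : 0 < rad m := by
  rw [rad]; positivity

/-- the bad set for the lower bound at scale m -/
def BadLow (xt : ℝ) (m : ℕ) : Set ℝ :=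
  ⋃ n ∈ Finset.range (2^m), (Icc (0:ℝ) 1 ∩ tent^[n] ⁻¹' (Icc (xt - rad m) (xt + rad m)))

lemma badLow_meas (xt : ℝ) (m : ℕ) :
    volume (BadLow xt m) ≤ ENNReal.ofReal (2/((m:ℝ)+1)^2) := by
  refine le_trans (measure_biUnion_finset_le _ _) ?_
  have hbd : ∀ n ∈ Finset.range (2^m),
      volume (Icc (0:ℝ) 1 ∩ tent^[n] ⁻¹' (Icc (xt - rad m) (xt + rad m))) ≤
      ENNReal.ofReal (2 * rad m) := by
    intro n _
    refine le_trans (strip_measure n _ _) ?_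
    apply ENNReal.ofReal_le_ofReal
    ring_nf
    exact le_rfl
  refine le_trans (Finset.sum_le_sum hbd) ?_
  rw [Finset.sum_const, Finset.card_range, nsmul_eq_mul]
  have hcast : ((2^m : ℕ) : ℝ≥0∞) = ENNReal.ofReal ((2:ℝ)^m) := by
    rw [ENNReal.ofReal_pow (by norm_num)]
    norm_num
  rw [hcast, ← ENNReal.ofReal_mul (by positivity)]
  apply ENNReal.ofReal_le_ofReal
  rw [rad]
  have h2m : (0:ℝ) < 2^m := by positivity
  have hm1 : (0:ℝ) < ((m:ℝ)+1)^2 := by positivity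
  apply le_of_eq
  field_simp

lemma ae_low (xt : ℝ) :
    ∀ᵐ x ∂(volume.restrict (Set.Icc (0:ℝ) 1)),
      ∀ᶠ m in atTop, ∀ n < 2^m, tent^[n] x ∉ Icc (xt - rad m) (xt + rad m) := by
  have hsum : (∑' m, (volume.restrict (Set.Icc (0:ℝ) 1)) (BadLow xt m)) ≠ ∞ := by
    have hbd : ∀ m, (volume.restrict (Set.Icc (0:ℝ) 1)) (BadLow xt m) ≤
        ENNReal.ofReal (2/((m:ℝ)+1)^2) := by
      intro m
      rw [Measure.restrict_apply' measurableSet_Icc]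
      exact le_trans (measure_mono Set.inter_subset_left) (badLow_meas xt m)
    refine ne_top_of_le_ne_top ?_ (ENNReal.tsum_le_tsum hbd)
    have hsumm : Summable (fun m : ℕ => 2/((m:ℝ)+1)^2) := by
      have h := Real.summable_one_div_nat_pow.mpr (by norm_num : 1 < 2)
      have h2 := (summable_nat_add_iff 1).mpr h
      have h3 := h2.mul_left 2
      apply h3.congr
      intro n
      push_cast
      ring
    rw [← ENNReal.ofReal_tsum_of_nonneg (fun m => by positivity) hsumm]
    exact ENNReal.ofReal_ne_top
  filter_upwards [MeasureTheory.ae_eventually_notMem hsum,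
    ae_restrict_mem measurableSet_Icc] with x hx hxI
  filter_upwards [hx] with m hm
  intro n hn hmem
  exact hm (Set.mem_biUnion (Finset.mem_range.mpr hn) ⟨hxI, hmem⟩)

lemma ae_ne (xt : ℝ) :
    ∀ᵐ x ∂(volume.restrict (Set.Icc (0:ℝ) 1)), ∀ n, tent^[n] x ≠ xt := by
  rw [MeasureTheory.ae_iff]
  refine le_antisymm ?_ (zero_le)
  have hsub : {x | ¬∀ n, tent^[n] x ≠ xt} ⊆ ⋃ n, tent^[n] ⁻¹' ({xt} : Set ℝ) := by
    intro x hx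
    push_neg at hx
    obtain ⟨n, hn⟩ := hx
    exact Set.mem_iUnion.mpr ⟨n, by simp [hn]⟩
  refine le_trans (measure_mono hsub) ?_
  rw [Measure.restrict_apply' measurableSet_Icc, Set.iUnion_inter]
  refine le_trans (measure_iUnion_le _) ?_
  have hz : ∀ n : ℕ, volume ((tent^[n] ⁻¹' ({xt} : Set ℝ)) ∩ Icc (0:ℝ) 1) = 0 := by
    intro n
    refine le_antisymm ?_ (zero_le)
    rw [Set.inter_comm, ← Set.Icc_self]
    refine le_trans (strip_measure n xt xt) ?_
    simp
  simp [hz]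

set_option maxHeartbeats 1000000 in
lemma main_inner {xt : ℝ} (hxt : xt ∈ Ico (0:ℝ) 1) :
    ∀ᵐ x ∂(volume.restrict (Set.Icc (0 : ℝ) 1)),
      ∃ C : ℝ, 0 < C ∧ ∃ u₀ : ℝ, 0 < u₀ ∧ ∀ u ≥ u₀,
        |Real.log ((hitLevel tent (fun y => - Real.log |y - xt|) u x : ℕ) : ℝ) - u|
          ≤ C * Real.log u := by
  filter_upwards [ae_high hxt, ae_low xt, ae_ne xt] with x hHi hLo hNe
  obtain ⟨M₂, hM₂⟩ := eventually_atTop.mp hHi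
  obtain ⟨M₁, hM₁⟩ := eventually_atTop.mp hLo
  refine ⟨6, by norm_num, ((M₁:ℝ) + M₂ + 100)^2, by positivity, ?_⟩
  intro u hu
  -- basic numeric facts
  have hlog2pos : 0 < Real.log 2 := Real.log_pos (by norm_num)
  have hlog2le : Real.log 2 ≤ 1 := by
    linarith [Real.log_le_sub_one_of_pos (by norm_num : (0:ℝ) < 2)]
  have hMnn : (0:ℝ) ≤ (M₁:ℝ) + M₂ := by positivity
  have hu100 : 100 ≤ u := le_trans (by nlinarith) hu
  have hupos : 0 < u := by linarith
  have hsq : Real.sqrt u * Real.sqrt u = u := Real.mul_self_sqrt (le_of_lt hupos)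
  have hsqge : (M₁:ℝ) + M₂ + 100 ≤ Real.sqrt u := Real.le_sqrt_of_sq_le hu
  have hsq10 : (10:ℝ) ≤ Real.sqrt u := by linarith
  have hlogu2sq : Real.log u ≤ 2 * Real.sqrt u := by
    have h1 : Real.log u = 2 * Real.log (Real.sqrt u) := by
      rw [Real.log_sqrt (le_of_lt hupos)]; ring
    have h2 : Real.log (Real.sqrt u) ≤ Real.sqrt u - 1 :=
      Real.log_le_sub_one_of_pos (Real.sqrt_pos.mpr hupos)
    nlinarith
  have hloguge1 : 1 ≤ Real.log u := by
    have he : Real.exp 1 ≤ u := by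
      have := Real.exp_one_lt_d9
      linarith
    calc (1:ℝ) = Real.log (Real.exp 1) := (Real.log_exp 1).symm
      _ ≤ Real.log u := Real.log_le_log (Real.exp_pos 1) he
  have hlogupos : (0:ℝ) < Real.log u := by linarith
  have h5log : 5 * Real.log u ≤ u - 10 := by nlinarith
  -- upper side
  set mU := ⌈u / Real.log 2⌉₊ with hmUdef
  have hmUge : u / Real.log 2 ≤ (mU:ℝ) := Nat.le_ceil _
  have hmUle : (mU:ℝ) ≤ u / Real.log 2 + 1 :=
    le_of_lt (Nat.ceil_lt_add_one (by positivity))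
  have hmUlog : u ≤ (mU:ℝ) * Real.log 2 := by
    rw [div_le_iff₀ hlog2pos] at hmUge
    linarith
  have hmUgeu : u ≤ (mU:ℝ) := by
    have : u ≤ u / Real.log 2 := by
      rw [le_div_iff₀ hlog2pos]
      nlinarith
    linarith
  have hmUleu : (mU:ℝ) ≤ u^2 := by
    have h2' : u / Real.log 2 ≤ 2*u := by
      rw [div_le_iff₀ hlog2pos]
      nlinarith [Real.log_two_gt_d9]
    nlinarith
  have hM₂mU : M₂ ≤ mU := by
    have : (M₂:ℝ) ≤ (mU:ℝ) := by
      have : (M₂:ℝ) ≤ u := by nlinarith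
      linarith
    exact_mod_cast this
  obtain ⟨j, hj, hjmem⟩ := hM₂ mU hM₂mU
  have hyne : tent^[j*mU] x ≠ xt := hNe _
  have h2mU : (0:ℝ) < 2^mU := by positivity
  have hdist : |tent^[j*mU] x - xt| ≤ 1/2^mU := by
    obtain ⟨h1, h2⟩ := hjmem
    obtain ⟨h3, h4⟩ := mem_dIdx hxt mU
    have hlen : ((dIdx xt mU : ℝ)+1)/2^mU = (dIdx xt mU : ℝ)/2^mU + 1/2^mU := by ring
    rw [abs_le]
    constructor
    · rw [hlen] at h4; linarith
    · rw [hlen] at h2; linarith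
  have hdistpos : 0 < |tent^[j*mU] x - xt| := abs_pos.mpr (sub_ne_zero.mpr hyne)
  have hφ : u ≤ -Real.log |tent^[j*mU] x - xt| := by
    have h1 : Real.log |tent^[j*mU] x - xt| ≤ Real.log (1/2^mU) :=
      Real.log_le_log hdistpos hdist
    have h2 : Real.log (1/(2:ℝ)^mU) = -((mU:ℝ) * Real.log 2) := by
      rw [one_div, Real.log_inv, Real.log_pow]
    linarith
  have hSmem : (j*mU) ∈ {n : ℕ | u ≤ -Real.log |tent^[n] x - xt|} := hφ
  set τ := hitLevel tent (fun y => - Real.log |y - xt|) u x with hτdef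
  have hτ : τ = sInf {n : ℕ | u ≤ -Real.log |tent^[n] x - xt|} := rfl
  have hτle : τ ≤ j*mU := by
    rw [hτ]
    exact Nat.sInf_le hSmem
  -- lower side
  set mL := ⌊(u - 5*Real.log u)/Real.log 2⌋₊ with hmLdef
  have hargnn : 0 ≤ (u - 5*Real.log u)/Real.log 2 := by
    apply div_nonneg _ (le_of_lt hlog2pos)
    linarith
  have hmLle : (mL:ℝ) ≤ (u - 5*Real.log u)/Real.log 2 := Nat.floor_le hargnn
  have hmLgt : (u - 5*Real.log u)/Real.log 2 - 1 < (mL:ℝ) := Nat.sub_one_lt_floor _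
  have hmLlog : (mL:ℝ) * Real.log 2 ≤ u - 5*Real.log u := by
    have := (le_div_iff₀ hlog2pos).mp hmLle
    linarith
  have hmLglb : u - 5*Real.log u - 1 ≤ (mL:ℝ) := by
    have hdgeq : u - 5*Real.log u ≤ (u - 5*Real.log u)/Real.log 2 := by
      rw [le_div_iff₀ hlog2pos]
      have hx : 0 ≤ u - 5*Real.log u := by linarith
      exact mul_le_of_le_one_right hx hlog2le
    linarith
  have hM₁mL : M₁ ≤ mL := by
    have h1 : (M₁:ℝ) ≤ (mL:ℝ) := by nlinarith
    exact_mod_cast h1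
  have h1mL : 1 ≤ mL := by
    have h1 : (1:ℝ) ≤ (mL:ℝ) := by nlinarith
    exact_mod_cast h1
  have h2mL : (0:ℝ) < 2^mL := by positivity
  have hmL1pos : (0:ℝ) < (mL:ℝ) + 1 := by positivity
  -- e^{-u} ≤ rad mL
  have hrad : Real.exp (-u) ≤ rad mL := by
    have hA : (0:ℝ) < 2^mL*((mL:ℝ)+1)^2 := by positivity
    have hlogA : Real.log (2^mL*((mL:ℝ)+1)^2) ≤ u := by
      rw [Real.log_mul (ne_of_gt h2mL) (ne_of_gt (by positivity)), Real.log_pow,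
        Real.log_pow]
      have hb1 : (mL:ℝ) * Real.log 2 ≤ u - 5*Real.log u := hmLlog
      have hmLu : (mL:ℝ) + 1 ≤ u^2 := by
        have : (mL:ℝ) ≤ (u - 5*Real.log u)/Real.log 2 := hmLle
        have h2' : (u - 5*Real.log u)/Real.log 2 ≤ 2*u := by
          rw [div_le_iff₀ hlog2pos]
          nlinarith [Real.log_two_gt_d9]
        nlinarith
      have hb2 : Real.log ((mL:ℝ)+1) ≤ 2 * Real.log u := by
        have := Real.log_le_log hmL1pos hmLu
        rwa [show u^2 = u^(2:ℕ) by norm_num, Real.log_pow] at this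
        
      push_cast
      linarith
    have hAle : 2^mL*((mL:ℝ)+1)^2 ≤ Real.exp u := by
      calc 2^mL*((mL:ℝ)+1)^2 = Real.exp (Real.log (2^mL*((mL:ℝ)+1)^2)) :=
            (Real.exp_log hA).symm
        _ ≤ Real.exp u := Real.exp_le_exp.mpr hlogA
    rw [rad, le_div_iff₀ hA]
    calc Real.exp (-u) * (2^mL*((mL:ℝ)+1)^2) ≤ Real.exp (-u) * Real.exp u := by
          apply mul_le_mul_of_nonneg_left hAle (le_of_lt (Real.exp_pos _))
      _ = 1 := by rw [← Real.exp_add]; simp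
  -- every element of the hitting set is ≥ 2^mL
  have hlb : ∀ n ∈ {n : ℕ | u ≤ -Real.log |tent^[n] x - xt|}, 2^mL ≤ n := by
    intro n hn
    by_contra hcon
    push_neg at hcon
    have hnot := hM₁ mL hM₁mL n hcon
    have habs : rad mL < |tent^[n] x - xt| := by
      by_contra h'
      push_neg at h'
      rw [abs_le] at h'
      exact hnot ⟨by linarith [h'.1], by linarith [h'.2]⟩
    have hlgt : -u < Real.log |tent^[n] x - xt| := by
      have := Real.log_lt_log (Real.exp_pos (-u)) (lt_of_le_of_lt hrad habs)
      rwa [Real.log_exp] at this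
    have : u ≤ -Real.log |tent^[n] x - xt| := hn
    linarith
  have hτS : τ ∈ {n : ℕ | u ≤ -Real.log |tent^[n] x - xt|} := by
    rw [hτ]
    exact Nat.sInf_mem ⟨j*mU, hSmem⟩
  have hτge : 2^mL ≤ τ := hlb τ hτS
  -- conclude
  have hτpos : 0 < τ := lt_of_lt_of_le (by positivity : 0 < 2^mL) hτge
  have hτposR : (0:ℝ) < (τ:ℝ) := by exact_mod_cast hτpos
  -- lower bound for log τ
  have hlogτge : u - 6*Real.log u ≤ Real.log (τ:ℝ) := by
    have hcast : ((2:ℝ))^mL ≤ (τ:ℝ) := by exact_mod_cast hτge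
    have h1 : Real.log ((2:ℝ)^mL) ≤ Real.log (τ:ℝ) := Real.log_le_log h2mL hcast
    rw [Real.log_pow] at h1
    have h2 : u - 5*Real.log u - Real.log 2 ≤ (mL:ℝ) * Real.log 2 := by
      have := mul_le_mul_of_nonneg_right (le_of_lt hmLgt) (le_of_lt hlog2pos)
      rw [sub_mul, div_mul_cancel₀ _ (ne_of_gt hlog2pos)] at this
      linarith
    nlinarith
  -- upper bound for log τ
  have hlogτle : Real.log (τ:ℝ) ≤ u + 6*Real.log u := by
    have hτleR : (τ:ℝ) ≤ (mU:ℝ)^2 * 2^mU := by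
      have h1 : τ ≤ mU * 2^mU * mU := le_trans hτle
        (Nat.mul_le_mul_right mU (le_of_lt hj))
      have h2 : ((mU * 2^mU * mU : ℕ):ℝ) = (mU:ℝ)^2 * 2^mU := by push_cast; ring
      calc (τ:ℝ) ≤ ((mU * 2^mU * mU : ℕ):ℝ) := by exact_mod_cast h1
        _ = (mU:ℝ)^2 * 2^mU := h2
    have hmUpos : (0:ℝ) < (mU:ℝ) := by linarith
    have h1 : Real.log (τ:ℝ) ≤ Real.log ((mU:ℝ)^2 * 2^mU) :=
      Real.log_le_log hτposR hτleR
    rw [Real.log_mul (by positivity) (by positivity), Real.log_pow, Real.log_pow] at h1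
    have h2 : Real.log (mU:ℝ) ≤ 2 * Real.log u := by
      have := Real.log_le_log hmUpos hmUleu
      rwa [show u^2 = u^(2:ℕ) by norm_num, Real.log_pow] at this
    have h3 : (mU:ℝ) * Real.log 2 ≤ u + Real.log 2 := by
      have := mul_le_mul_of_nonneg_right hmUle (le_of_lt hlog2pos)
      rw [add_mul, div_mul_cancel₀ _ (ne_of_gt hlog2pos)] at this
      linarith
    push_cast at h1
    nlinarith
  rw [abs_le]
  constructor
  · linarith
  · linarith

end TentAux

/-- Lemma: for the tent map and the observable `φ(x) = −log|x − x̃|`, for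
Lebesgue-a.e. `x̃ ∈ [0,1]` and Lebesgue-a.e. `x ∈ [0,1]`,
`log τ_u^φ(x) = u + O(log u)` as `u → ∞`. -/
theorem tent_hitting_time_asymptotics :
    ∀ᵐ xt ∂(volume.restrict (Set.Icc (0 : ℝ) 1)),
      ∀ᵐ x ∂(volume.restrict (Set.Icc (0 : ℝ) 1)),
        ∃ C : ℝ, 0 < C ∧ ∃ u₀ : ℝ, 0 < u₀ ∧ ∀ u ≥ u₀,
          |Real.log ((hitLevel tent (fun y => - Real.log |y - xt|) u x : ℕ) : ℝ) - u|
            ≤ C * Real.log u := by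
  have hae1 : ∀ᵐ xt ∂(volume.restrict (Set.Icc (0:ℝ) 1)), xt ∈ Set.Icc (0:ℝ) 1 :=
    ae_restrict_mem measurableSet_Icc
  have hae2 : ∀ᵐ xt ∂(volume.restrict (Set.Icc (0:ℝ) 1)), xt ≠ 1 := by
    rw [MeasureTheory.ae_iff]
    have h : {xt : ℝ | ¬ xt ≠ 1} = {1} := by ext; simp
    rw [h, Measure.restrict_apply' measurableSet_Icc]
    exact measure_mono_null Set.inter_subset_left (Real.volume_singleton)
  filter_upwards [hae1, hae2] with xt h1 h2
  exact TentAux.main_inner ⟨h1.1, lt_of_le_of_ne h1.2 h2⟩
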